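/- arXiv:1605.03152 — 4 statements merged into one kernel-verified Lean document; each statement's English description precedes it below -/
import Mathlib

section
/- Let (D, d, f) be an MCO with d ≥ 2 and let w ∈ W_d have w_i > 0 for every i. If no two distinct Pareto-optimal solutions of the MCO are weakly-equivalent, then the minimizer of the linearization by w is unique: there is exactly one x ∈ D with ⟨f(x), w⟩ = min_{y ∈ D} ⟨f(y), w⟩. -/
open Finset

/-- Membership in the weight set `W_d`: each coordinate is in `[0,1)` and coordinates sum to 1. -/
def memW (d : ℕ) (w : Fin d → ℝ) : Prop :=
  (∀ i, 0 ≤ w i ∧ w i < 1) ∧ (∑ i, w i) = 1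

/-- Linearization `⟨f(x), w⟩ = ∑ i, w i * f x i`. -/
def lin {D : Type} {d : ℕ} (f : D → Fin d → ℝ) (w : Fin d → ℝ) (x : D) : ℝ :=
  ∑ i, w i * f x i

/-- `x` is a Pareto-optimal solution: no `y` dominates it strictly. -/
def ParetoOpt {D : Type} {d : ℕ} (f : D → Fin d → ℝ) (x : D) : Prop :=
  ¬ ∃ y : D, (∀ i, f y i ≤ f x i) ∧ f y ≠ f x

/-- The `ℓ₁` norm of a vector in `ℝ^d`. -/
def l1norm {d : ℕ} (v : Fin d → ℝ) : ℝ := ∑ i, |v i|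

/-- The MCO `(D, d, f)` is normal. -/
def NormalMCO {D : Type} {d : ℕ} (f : D → Fin d → ℝ) : Prop :=
  (∀ i : Fin d, ∃! x : D, f x i = 0) ∧
  (∀ (i j : Fin d) (x y : D), i ≠ j → f x i = 0 → f y j = 0 → x ≠ y)

/-- The MCO `(D, d, f)` is collision-free with gap vector `lam`. -/
def CollisionFree {D : Type} {d : ℕ} (f : D → Fin d → ℝ) (lam : Fin d → ℝ) : Prop :=
  ∀ (i : Fin d) (x y : D), x ≠ y → lam i < |f x i - f y i|

theorem stmt_9 {D : Type} [Fintype D] [Nonempty D] {d : ℕ} (hd : 2 ≤ d)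
    (f : D → Fin d → ℝ) (hf : ∀ x i, 0 ≤ f x i)
    (w : Fin d → ℝ) (hw : memW d w) (hwpos : ∀ i, 0 < w i)
    (hnwe : ∀ x y : D, ParetoOpt f x → ParetoOpt f y → x ≠ y →
      ¬ ∃ v : Fin d → ℝ, memW d v ∧ lin f v x = lin f v y) :
    ∃! x : D, ∀ y : D, lin f w x ≤ lin f w y := by
  obtain ⟨x, -, hx⟩ := Finset.exists_min_image Finset.univ (lin f w) ⟨Classical.arbitrary D, Finset.mem_univ _⟩
  have hmin : ∀ y : D, lin f w x ≤ lin f w y := fun y => hx y (Finset.mem_univ y)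
  -- any minimizer is Pareto optimal
  have hpo : ∀ z : D, (∀ y : D, lin f w z ≤ lin f w y) → ParetoOpt f z := by
    intro z hz ⟨y, hle, hne⟩
    have : ∃ i, f y i ≠ f z i := by
      by_contra h
      push_neg at h
      exact hne (funext h)
    obtain ⟨i, hi⟩ := this
    have hlt : lin f w y < lin f w z := by
      apply Finset.sum_lt_sum (fun j _ => by
        have := hle j
        nlinarith [(hwpos j).le])
      exact ⟨i, Finset.mem_univ i, by
        have h1 := lt_of_le_of_ne (hle i) hi
        nlinarith [hwpos i]⟩
    exact absurd (hz y) (not_le.mpr hlt)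
  refine ⟨x, hmin, fun y hy => ?_⟩
  by_contra hne
  exact hnwe y x (hpo y hy) (hpo x hmin) hne ⟨w, hw, le_antisymm (hy x) (hmin y)⟩
end

section
/- Let (D, d, f) be an MCO, let m ∈ ℝ satisfy f_i(y) ≤ m for every y ∈ D and every index i, let ε ≥ 0, and let w, w′ ∈ W_d with ‖w − w′‖₁ ≤ ε. If x, y ∈ D satisfy ⟨f(y), w⟩ − ⟨f(x), w⟩ > 2·m·d·ε, then ⟨f(y), w′⟩ > ⟨f(x), w′⟩; that is, a strict linearized ordering with margin exceeding 2mdε is preserved under any ℓ₁-perturbation of the weight vector of size at most ε. -/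
open Finset

theorem stmt_11 {D : Type} [Fintype D] [Nonempty D] {d : ℕ}
    (f : D → Fin d → ℝ) (hf : ∀ x i, 0 ≤ f x i)
    (m : ℝ) (hm : ∀ (y : D) (i : Fin d), f y i ≤ m)
    (ε : ℝ) (hε : 0 ≤ ε)
    (w w' : Fin d → ℝ) (hw : memW d w) (hw' : memW d w')
    (hclose : l1norm (fun i => w i - w' i) ≤ ε)
    (x y : D) (hmargin : 2 * m * d * ε < lin f w y - lin f w x) :
    lin f w' x < lin f w' y := by
  rcases Nat.eq_zero_or_pos d with hd | hd
  · exfalso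
    subst hd
    simp [lin] at hmargin
  · have hd1 : (1 : ℝ) ≤ (d : ℝ) := by exact_mod_cast hd
    obtain ⟨z0⟩ := ‹Nonempty D›
    have hm0 : 0 ≤ m := le_trans (hf z0 ⟨0, hd⟩) (hm z0 ⟨0, hd⟩)
    have key : ∀ z, |lin f w z - lin f w' z| ≤ m * ε := by
      intro z
      have heq : lin f w z - lin f w' z = ∑ i, (w i - w' i) * f z i := by
        simp [lin, ← Finset.sum_sub_distrib, sub_mul]
      rw [heq]
      calc |∑ i, (w i - w' i) * f z i| ≤ ∑ i, |(w i - w' i) * f z i| :=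
            Finset.abs_sum_le_sum_abs _ _
        _ ≤ ∑ i, |w i - w' i| * m := by
            apply Finset.sum_le_sum
            intro i _
            rw [abs_mul, abs_of_nonneg (hf z i)]
            exact mul_le_mul_of_nonneg_left (hm z i) (abs_nonneg _)
        _ = (∑ i, |w i - w' i|) * m := by rw [Finset.sum_mul]
        _ ≤ ε * m := mul_le_mul_of_nonneg_right hclose hm0
        _ = m * ε := mul_comm _ _
    have hx := abs_le.mp (key x)
    have hy := abs_le.mp (key y)
    have hme : 0 ≤ m * ε := mul_nonneg hm0 hε
    nlinarith [hx.1, hx.2, hy.1, hy.2]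
end

section
/- Let (D, d, f) be a normal MCO with d ≥ 2 that is collision-free with gap vector λ, in which no two distinct Pareto-optimal solutions are equivalent, and let m = max over x ∈ D and indices i of f_i(x). Let w ∈ W_d have w_i > 0 for every i, and suppose the minimum of the linearization y ↦ ⟨f(y), w⟩ over D is attained at two or more points. Then there exists w′ ∈ W_d with ‖w − w′‖₁ ≤ ⟨λ, w⟩/(m·d) such that the linearization y ↦ ⟨f(y), w′⟩ attains its minimum over D at exactly one point, and this unique minimizer is one of the minimizers of the linearization by w. -/
open Finset

theorem stmt_13 {D : Type} [Fintype D] [Nonempty D] {d : ℕ} (hd : 2 ≤ d)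
    (f : D → Fin d → ℝ) (hf : ∀ x i, 0 ≤ f x i)
    (lam : Fin d → ℝ) (hlam : ∀ i, 0 < lam i)
    (hnorm : NormalMCO f) (hcf : CollisionFree f lam)
    (hneq : ∀ x y : D, ParetoOpt f x → ParetoOpt f y → f x = f y → x = y)
    (m : ℝ) (hm : IsGreatest {r : ℝ | ∃ (x : D) (i : Fin d), f x i = r} m)
    (w : Fin d → ℝ) (hw : memW d w) (hwpos : ∀ i, 0 < w i)
    (hdeg : ∃ x y : D, x ≠ y ∧ (∀ z : D, lin f w x ≤ lin f w z) ∧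
      (∀ z : D, lin f w y ≤ lin f w z)) :
    ∃ (w' : Fin d → ℝ) (x : D), memW d w' ∧
      l1norm (fun i => w i - w' i) ≤ (∑ i, w i * lam i) / (m * d) ∧
      (∀ y : D, lin f w' x ≤ lin f w' y) ∧
      (∀ y : D, (∀ z : D, lin f w' y ≤ lin f w' z) → y = x) ∧
      (∀ y : D, lin f w x ≤ lin f w y) := by
    classical
  obtain ⟨x0, y0, hxy0, hx0, hy0⟩ := hdeg
  have hdpos : 0 < d := by omega
  have hdr : (2:ℝ) ≤ (d:ℝ) := by exact_mod_cast hd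
  set i0 : Fin d := ⟨0, hdpos⟩ with hi0
  have hub : ∀ z i, f z i ≤ m := fun z i => hm.2 ⟨z, i, rfl⟩
  have hmpos : 0 < m := by
    have h1 := hcf i0 x0 y0 hxy0
    have h2 : |f x0 i0 - f y0 i0| ≤ m := by
      rw [abs_sub_le_iff]
      constructor
      · linarith [hub x0 i0, hf y0 i0]
      · linarith [hub y0 i0, hf x0 i0]
    linarith [hlam i0]
  set S := ∑ i, w i * lam i with hS
  have hSpos : 0 < S :=
    Finset.sum_pos (fun i _ => mul_pos (hwpos i) (hlam i)) ⟨i0, mem_univ _⟩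
  -- the set of minimizers
  set M : Finset D := univ.filter (fun z => ∀ z', lin f w z ≤ lin f w z') with hM
  have hx0M : x0 ∈ M := by simp [hM]; exact hx0
  obtain ⟨x, hxM, hxmin⟩ := M.exists_min_image (fun z => f z i0) ⟨x0, hx0M⟩
  have hxLe : ∀ z, lin f w x ≤ lin f w z := by
    have := hxM; simp [hM] at this; exact this
  set L := lin f w x with hL
  -- the gap gam between the minimum and the next value
  obtain ⟨gam, hgampos, hgam⟩ :
      ∃ gam : ℝ, 0 < gam ∧ ∀ z : D, z ∉ M → L + gam ≤ lin f w z := by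
    by_cases hN : (univ.filter (fun z : D => z ∉ M)).Nonempty
    · obtain ⟨zs, hzs, hzmin⟩ := (univ.filter (fun z : D => z ∉ M)).exists_min_image
        (fun z => lin f w z) hN
      simp only [mem_filter, mem_univ, true_and] at hzs
      have hgt : L < lin f w zs := by
        have : ¬ ∀ z', lin f w zs ≤ lin f w z' := by
          intro h; exact hzs (by simp [hM]; exact h)
        push_neg at this
        obtain ⟨z', hz'⟩ := this
        exact lt_of_le_of_lt (hxLe z') hz'
      refine ⟨lin f w zs - L, by linarith, fun z hz => ?_⟩
      have := hzmin z (by simp [hz])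
      linarith
    · refine ⟨1, one_pos, fun z hz => absurd ⟨z, by simp [hz]⟩ hN⟩
  -- choice of the perturbation parameter t
  set t : ℝ := min (S / (m * d * d)) (gam / (2 * (m + gam))) with ht
  have htpos : 0 < t := by
    apply lt_min
    · positivity
    · positivity
  have htB : t * (2 * (m + gam)) ≤ gam := by
    have h1 : t ≤ gam / (2 * (m + gam)) := min_le_right _ _
    rw [← le_div_iff₀ (by positivity)]
    exact h1
  have ht1 : t < 1 := by nlinarith
  have h1t : 0 < 1 - t := by linarith
  have htm : t * m < (1 - t) * gam := by nlinarith
  -- the perturbed weight vector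
  set w' : Fin d → ℝ := fun i => (1 - t) * w i + t * (if i = i0 then 1 else 0) with hw'
  have hlin' : ∀ z, lin f w' z = (1 - t) * lin f w z + t * f z i0 := by
    intro z
    simp only [lin, hw', add_mul, Finset.sum_add_distrib, mul_assoc, ← Finset.mul_sum,
      ite_mul, one_mul, zero_mul, mul_ite, mul_zero, mul_one,
      Finset.sum_ite_eq', Finset.mem_univ, if_true]
  -- strict comparison with every other point
  have hstrict : ∀ y : D, y ≠ x → lin f w' x < lin f w' y := by
    intro y hyx
    by_cases hyM : y ∈ M
    · have hle : f x i0 ≤ f y i0 := hxmin y hyM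
      have hne : f x i0 ≠ f y i0 := by
        intro h
        have := hcf i0 y x hyx
        rw [h] at this
        simp at this
        linarith [hlam i0]
      have hlt : f x i0 < f y i0 := lt_of_le_of_ne hle hne
      have hyL : lin f w y = L := by
        have h1 : lin f w y ≤ lin f w x := by
          have := hyM; simp [hM] at this; exact this x
        have h2 : lin f w x ≤ lin f w y := hxLe y
        linarith
      rw [hlin' x, hlin' y, hyL, ← hL]
      nlinarith
    · have h1 : L + gam ≤ lin f w y := hgam y hyM
      rw [hlin' x, hlin' y, ← hL]
      nlinarith [hf y i0, hub x i0]
  refine ⟨w', x, ⟨?_, ?_⟩, ?_, ?_, ?_, hxLe⟩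
  · -- coordinates in [0,1)
    intro i
    constructor
    · by_cases hii : i = i0
      · simp only [hw', if_pos hii]
        nlinarith [(hw.1 i).1, htpos, h1t]
      · simp only [hw', if_neg hii]
        nlinarith [(hw.1 i).1, htpos, h1t]
    · by_cases hii : i = i0
      · have := (hw.1 i).2
        simp [hw', hii] at *
        nlinarith
      · have h1 := (hw.1 i).1
        have h2 := (hw.1 i).2
        simp [hw', hii]
        nlinarith
  · -- sum is 1
    simp only [hw', Finset.sum_add_distrib, ← Finset.mul_sum, hw.2, mul_one,
      Finset.sum_ite_eq', Finset.mem_univ, if_true]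
    ring
  · -- l1 bound
    have hterm : ∀ i : Fin d, |w i - w' i| ≤ t := by
      intro i
      have h1 := (hw.1 i).1
      have h2 := (hw.1 i).2
      by_cases hii : i = i0
      · subst hii
        simp only [hw', eq_self_iff_true, if_true]
        rw [abs_le]
        constructor <;>
          nlinarith [mul_nonneg htpos.le h1, mul_lt_mul_of_pos_left h2 htpos]
      · simp only [hw', if_neg hii]
        rw [abs_le]
        constructor <;> nlinarith
    have hsum : l1norm (fun i => w i - w' i) ≤ (d : ℝ) * t := by
      have := Finset.sum_le_card_nsmul univ (fun i => |w i - w' i|) t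
        (fun i _ => hterm i)
      simpa [l1norm, Finset.card_univ, nsmul_eq_mul] using this
    have htA : t ≤ S / (m * d * d) := min_le_left _ _
    have : (d : ℝ) * (S / (m * d * d)) = S / (m * d) := by
      field_simp
    calc l1norm (fun i => w i - w' i) ≤ (d:ℝ) * t := hsum
      _ ≤ (d:ℝ) * (S / (m * d * d)) := by
          apply mul_le_mul_of_nonneg_left htA (by positivity)
      _ = S / (m * d) := this
  · -- x minimizes lin f w'
    intro y
    by_cases hyx : y = x
    · rw [hyx]
    · exact le_of_lt (hstrict y hyx)
  · -- uniqueness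
    intro y hy
    by_contra hyx
    exact absurd (hy x) (not_le.mpr (hstrict y hyx))
end

section
/- (Mathematical core of the main theorem.) Let (D, d, f) be a normal MCO with d ≥ 2 that is collision-free with gap vector λ, in which no two distinct Pareto-optimal solutions are equivalent, and let m = max over x ∈ D and indices i of f_i(x). Then for every w ∈ W_d with w_i > 0 for all i, there exists w′ ∈ W_d with ‖w − w′‖₁ ≤ ⟨λ, w⟩/(m·d) such that the linearization y ↦ ⟨f(y), w′⟩ attains its minimum over D at a unique point x, and this x is a Pareto-optimal solution of the MCO. -/
open Finset

/-- Auxiliary: the set of parameters `t` at which a fixed perturbed linearization difference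
vanishes is finite, because it is the root set of a nonzero polynomial. -/
lemma aux_poly_finite {d : ℕ} (w a : Fin d → ℝ)
    (hwsum : ∑ i, w i = 1) (ha : ∃ i, a i ≠ 0) :
    {t : ℝ | ∑ i, (w i + (t ^ ((i : ℕ) + 1) - (∑ j : Fin d, t ^ ((j : ℕ) + 1)) / d)) * a i
      = 0}.Finite := by
  classical
  set A : ℝ := (∑ j, a j) / d with hA
  set P : Polynomial ℝ := Polynomial.C (∑ i, w i * a i) +
      ∑ i : Fin d, Polynomial.C (a i - A) * Polynomial.X ^ ((i : ℕ) + 1) with hP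
  have key : ∀ t : ℝ, P.eval t
      = ∑ i, (w i + (t ^ ((i : ℕ) + 1) - (∑ j : Fin d, t ^ ((j : ℕ) + 1)) / d)) * a i := by
    intro t
    have h1 : ∑ i, (w i + (t ^ ((i : ℕ) + 1) - (∑ j : Fin d, t ^ ((j : ℕ) + 1)) / d)) * a i
        = (∑ i, w i * a i) + ((∑ i, a i * t ^ ((i : ℕ) + 1))
            - ((∑ j : Fin d, t ^ ((j : ℕ) + 1)) / d) * ∑ i, a i) := by
      rw [Finset.mul_sum, ← Finset.sum_sub_distrib, ← Finset.sum_add_distrib]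
      exact Finset.sum_congr rfl fun i _ => by ring
    have h2 : ∑ i, (a i - A) * t ^ ((i : ℕ) + 1)
        = (∑ i, a i * t ^ ((i : ℕ) + 1)) - A * ∑ i : Fin d, t ^ ((i : ℕ) + 1) := by
      rw [Finset.mul_sum, ← Finset.sum_sub_distrib]
      exact Finset.sum_congr rfl fun i _ => by ring
    rw [h1]
    simp only [hP, Polynomial.eval_add, Polynomial.eval_finset_sum, Polynomial.eval_mul,
      Polynomial.eval_C, Polynomial.eval_pow, Polynomial.eval_X]
    rw [h2, hA]
    ring
  have hPne : P ≠ 0 := by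
    by_cases hconst : ∀ i, a i = A
    · have hc : P.coeff 0 = ∑ i, w i * a i := by
        simp [hP, Polynomial.finset_sum_coeff, Polynomial.coeff_C_mul, Polynomial.coeff_X_pow]
      have hval : ∑ i, w i * a i = A := by
        calc ∑ i, w i * a i = ∑ i, w i * A := by
              exact Finset.sum_congr rfl fun i _ => by rw [hconst i]
          _ = (∑ i, w i) * A := by rw [Finset.sum_mul]
          _ = A := by rw [hwsum, one_mul]
      obtain ⟨j, hj⟩ := ha
      have hA0 : A ≠ 0 := by rw [← hconst j]; exact hj
      intro h
      rw [h, Polynomial.coeff_zero] at hc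
      exact hA0 (by rw [← hval, ← hc])
    · push_neg at hconst
      obtain ⟨i, hi⟩ := hconst
      have hc : P.coeff ((i : ℕ) + 1) = a i - A := by
        rw [hP, Polynomial.coeff_add, Polynomial.coeff_C, if_neg (Nat.succ_ne_zero _),
          Polynomial.finset_sum_coeff, Finset.sum_eq_single i]
        · rw [Polynomial.coeff_C_mul, Polynomial.coeff_X_pow, if_pos rfl, mul_one, zero_add]
        · intro j _ hji
          have hne : ((i : ℕ) + 1) ≠ ((j : ℕ) + 1) := by
            intro h
            exact hji (Fin.ext (by omega))
          rw [Polynomial.coeff_C_mul, Polynomial.coeff_X_pow, if_neg hne, mul_zero]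
        · intro h; exact absurd (Finset.mem_univ i) h
      intro h
      rw [h, Polynomial.coeff_zero] at hc
      exact hi (by linarith [hc.symm])
  refine (Polynomial.finite_setOf_isRoot hPne).subset ?_
  intro t ht
  simp only [Set.mem_setOf_eq] at ht ⊢
  show P.IsRoot t
  rw [Polynomial.IsRoot, key t, ht]

theorem stmt_14 {D : Type} [Fintype D] [Nonempty D] {d : ℕ} (hd : 2 ≤ d)
    (f : D → Fin d → ℝ) (hf : ∀ x i, 0 ≤ f x i)
    (lam : Fin d → ℝ) (hlam : ∀ i, 0 < lam i)
    (hnorm : NormalMCO f) (hcf : CollisionFree f lam)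
    (hneq : ∀ x y : D, ParetoOpt f x → ParetoOpt f y → f x = f y → x = y)
    (m : ℝ) (hm : IsGreatest {r : ℝ | ∃ (x : D) (i : Fin d), f x i = r} m)
    (w : Fin d → ℝ) (hw : memW d w) (hwpos : ∀ i, 0 < w i) :
    ∃ (w' : Fin d → ℝ) (x : D), memW d w' ∧
      l1norm (fun i => w i - w' i) ≤ (∑ i, w i * lam i) / (m * d) ∧
      (∀ y : D, lin f w' x ≤ lin f w' y) ∧
      (∀ y : D, (∀ z : D, lin f w' y ≤ lin f w' z) → y = x) ∧
      ParetoOpt f x := by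
  classical
  have hd0 : (0:ℝ) < d := by
    have : (2:ℝ) ≤ d := by exact_mod_cast hd
    linarith
  set i0 : Fin d := ⟨0, by omega⟩ with hi0def
  set i1 : Fin d := ⟨1, by omega⟩ with hi1def
  obtain ⟨x0, hx0, -⟩ := hnorm.1 i0
  obtain ⟨x1, hx1, -⟩ := hnorm.1 i1
  have hi01 : i0 ≠ i1 := by simp [hi0def, hi1def, Fin.ext_iff]
  have hx01 : x0 ≠ x1 := hnorm.2 i0 i1 x0 x1 hi01 hx0 hx1
  have hm0 : 0 < m := by
    have h1 := hcf i0 x1 x0 (Ne.symm hx01)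
    rw [hx0, sub_zero, abs_of_nonneg (hf x1 i0)] at h1
    have h2 : f x1 i0 ≤ m := hm.2 ⟨x1, i0, rfl⟩
    have h3 := hlam i0
    linarith
  have hsumpos : 0 < ∑ i, w i * lam i :=
    Finset.sum_pos (fun i _ => mul_pos (hwpos i) (hlam i)) ⟨i0, Finset.mem_univ _⟩
  -- the perturbation
  set u : ℝ → Fin d → ℝ :=
    fun t i => t ^ ((i : ℕ) + 1) - (∑ j : Fin d, t ^ ((j : ℕ) + 1)) / d with hu
  set wt : ℝ → Fin d → ℝ := fun t i => w i + u t i with hwt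
  have sum_u : ∀ t, ∑ i, u t i = 0 := by
    intro t
    simp only [hu, Finset.sum_sub_distrib, Finset.sum_const, Finset.card_univ,
      Fintype.card_fin, nsmul_eq_mul]
    field_simp
    ring
  -- finiteness of the bad set
  have hdiff : ∀ (x y : D) (t : ℝ),
      lin f (wt t) x - lin f (wt t) y = ∑ i, (wt t i) * (f x i - f y i) := by
    intro x y t
    simp only [lin, ← Finset.sum_sub_distrib]
    exact Finset.sum_congr rfl fun i _ => by ring
  have hbad : (⋃ x : D, ⋃ y : D,
      {t : ℝ | x ≠ y ∧ lin f (wt t) x = lin f (wt t) y}).Finite := by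
    apply Set.finite_iUnion
    intro x
    apply Set.finite_iUnion
    intro y
    by_cases hxy : x = y
    · convert Set.finite_empty
      ext t
      simp [hxy]
    · have ha : ∃ i, (f x i - f y i) ≠ 0 := by
        refine ⟨i0, fun h => ?_⟩
        have := hcf i0 x y hxy
        rw [h, abs_zero] at this
        linarith [hlam i0]
      refine (aux_poly_finite w (fun i => f x i - f y i) hw.2 ha).subset ?_
      intro t ht
      simp only [Set.mem_setOf_eq] at ht ⊢
      have := hdiff x y t
      rw [ht.2, sub_self] at this
      rw [← this]
  -- choose t
  have hne : (Finset.univ : Finset (Fin d)).Nonempty := ⟨i0, Finset.mem_univ _⟩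
  set εw : ℝ := Finset.univ.inf' hne w with hεw
  set εb : ℝ := Finset.univ.inf' hne (fun i => 1 - w i) with hεb
  set εc : ℝ := (∑ i, w i * lam i) / (m * d * d) with hεc
  set ε : ℝ := min 1 (min εw (min (εb / 2) εc)) with hε
  have hεpos : 0 < ε := by
    apply lt_min one_pos
    apply lt_min
    · exact (Finset.lt_inf'_iff hne).2 fun i _ => hwpos i
    · apply lt_min
      · have : 0 < εb := (Finset.lt_inf'_iff hne).2 fun i _ => by linarith [(hw.1 i).2]
        linarith
      · exact div_pos hsumpos (by positivity)
  obtain ⟨t, ht⟩ : ((Set.Ioo (0:ℝ) ε) \ (⋃ x : D, ⋃ y : D,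
      {t : ℝ | x ≠ y ∧ lin f (wt t) x = lin f (wt t) y})).Nonempty :=
    ((Set.Ioo_infinite hεpos).diff hbad).nonempty
  obtain ⟨⟨ht0, htε⟩, htB⟩ := ht
  have ht1 : t ≤ 1 := le_of_lt (lt_of_lt_of_le htε (min_le_left _ _))
  have htεw : t ≤ εw := le_of_lt (lt_of_lt_of_le htε ((min_le_right _ _).trans (min_le_left _ _)))
  have htεb : t < εb := by
    have h1 : t < εb / 2 :=
      lt_of_lt_of_le htε ((min_le_right _ _).trans ((min_le_right _ _).trans (min_le_left _ _)))
    have h2 : 0 < εb := (Finset.lt_inf'_iff hne).2 fun i _ => by linarith [(hw.1 i).2]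
    linarith
  have htεc : t ≤ εc :=
    le_of_lt (lt_of_lt_of_le htε ((min_le_right _ _).trans ((min_le_right _ _).trans
      (min_le_right _ _))))
  -- bounds on u t
  have hpow : ∀ k : ℕ, 1 ≤ k → t ^ k ≤ t := by
    intro k hk
    calc t ^ k ≤ t ^ 1 := pow_le_pow_of_le_one (le_of_lt ht0) ht1 hk
      _ = t := pow_one t
  have hSle : (∑ j : Fin d, t ^ ((j : ℕ) + 1)) ≤ d * t := by
    calc (∑ j : Fin d, t ^ ((j : ℕ) + 1)) ≤ ∑ _j : Fin d, t :=
          Finset.sum_le_sum fun j _ => hpow _ (by omega)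
      _ = d * t := by rw [Finset.sum_const, Finset.card_univ, Fintype.card_fin, nsmul_eq_mul]
  have hS0 : 0 ≤ ∑ j : Fin d, t ^ ((j : ℕ) + 1) :=
    Finset.sum_nonneg fun j _ => pow_nonneg (le_of_lt ht0) _
  have hub : ∀ i, |u t i| ≤ t := by
    intro i
    rw [abs_le]
    have h1 : (∑ j : Fin d, t ^ ((j : ℕ) + 1)) / d ≤ t := by
      rw [div_le_iff₀ hd0]
      linarith [hSle]
    have h2 : 0 ≤ (∑ j : Fin d, t ^ ((j : ℕ) + 1)) / d := div_nonneg hS0 (le_of_lt hd0)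
    have h3 : 0 ≤ t ^ ((i : ℕ) + 1) := pow_nonneg (le_of_lt ht0) _
    have h4 : t ^ ((i : ℕ) + 1) ≤ t := hpow _ (by omega)
    constructor <;> simp only [hu] <;> linarith
  -- the witness
  refine ⟨wt t, ?_⟩
  have hwtmem : memW d (wt t) := by
    constructor
    · intro i
      have h1 := hub i
      rw [abs_le] at h1
      have h2 : εw ≤ w i := Finset.inf'_le _ (Finset.mem_univ i)
      have h3 : εb ≤ 1 - w i := Finset.inf'_le _ (Finset.mem_univ i)
      constructor
      · simp only [hwt]; linarith
      · simp only [hwt]; linarith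
    · simp only [hwt]
      rw [Finset.sum_add_distrib, hw.2, sum_u t, add_zero]
  have hwtnn : ∀ i, 0 ≤ wt t i := fun i => (hwtmem.1 i).1
  -- injectivity of the linearization
  have hinj : ∀ x y : D, x ≠ y → lin f (wt t) x ≠ lin f (wt t) y := by
    intro x y hxy heq
    exact htB (Set.mem_iUnion.2 ⟨x, Set.mem_iUnion.2 ⟨y, ⟨hxy, heq⟩⟩⟩)
  -- minimizer
  obtain ⟨x, -, hxmin⟩ := Finset.exists_min_image Finset.univ (lin f (wt t))
    ⟨Classical.arbitrary D, Finset.mem_univ _⟩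
  refine ⟨x, hwtmem, ?_, fun y => hxmin y (Finset.mem_univ y), ?_, ?_⟩
  · -- distance bound
    have h1 : l1norm (fun i => w i - wt t i) = ∑ i, |u t i| := by
      unfold l1norm
      exact Finset.sum_congr rfl fun i _ => by
        simp only [hwt]
        rw [show w i - (w i + u t i) = -(u t i) by ring, abs_neg]
    rw [h1]
    calc ∑ i, |u t i| ≤ ∑ _i : Fin d, t := Finset.sum_le_sum fun i _ => hub i
      _ = d * t := by rw [Finset.sum_const, Finset.card_univ, Fintype.card_fin, nsmul_eq_mul]
      _ ≤ d * εc := by nlinarith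
      _ = (∑ i, w i * lam i) / (m * d) := by
          rw [hεc]
          field_simp
  · -- uniqueness
    intro y hy
    by_contra hne'
    exact hinj y x hne' (le_antisymm (hy x) (hxmin y (Finset.mem_univ y)))
  · -- Pareto optimality
    rintro ⟨y, hdom, hfne⟩
    have hyx : y ≠ x := fun h => hfne (by rw [h])
    have h1 : lin f (wt t) y ≤ lin f (wt t) x :=
      Finset.sum_le_sum fun i _ => mul_le_mul_of_nonneg_left (hdom i) (hwtnn i)
    have h2 : lin f (wt t) x ≤ lin f (wt t) y := hxmin y (Finset.mem_univ y)
    exact hinj y x hyx (le_antisymm h1 h2)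
end
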